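/- Let σ: ℝ → ℝ be continuous with σ(0) = 0, and suppose |σ(s/2) - s/2| ≤ (1/2 - γ)·|σ(s) - s| for all s in an interval [0, B], where γ ∈ (0, 1/2). Let a ∈ ℝ and define r(t) = |e^a·σ(t) - t| and A(t) = σ(t) - t. If r(B) ≤ 1 and |A(B)| > 4γ^{-1}·e^{-a}, then r(B/2) > 1; consequently there exists N ∈ [0, B] with r(N) = 1. -/

import Mathlib

/-- Divergence step for variable-curvature horocycle flows: if `σ` is
continuous with `σ 0 = 0`, satisfies the halving inequality on `[0, B]`,
`r t := |e^a σ t - t|` satisfies `r B ≤ 1`, and `|σ B - B| > 4 γ⁻¹ e^{-a}`,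
then `r (B/2) > 1`, and there exists `N ∈ [0, B]` with `r N = 1`. -/
theorem stmt9 (σ : ℝ → ℝ) (hσcont : Continuous σ) (hσ0 : σ 0 = 0)
    (γ : ℝ) (hγ0 : 0 < γ) (hγ : γ < 1 / 2)
    (B : ℝ) (hB : 0 < B)
    (hhalf : ∀ s ∈ Set.Icc (0 : ℝ) B, |σ (s / 2) - s / 2| ≤ (1 / 2 - γ) * |σ s - s|)
    (a : ℝ) (r : ℝ → ℝ) (hr : ∀ t, r t = |Real.exp a * σ t - t|)
    (hrB : r B ≤ 1) (hAB : 4 * γ⁻¹ * Real.exp (-a) < |σ B - B|) :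
    1 < r (B / 2) ∧ ∃ N ∈ Set.Icc (0 : ℝ) B, r N = 1 := by
  have hE : (0:ℝ) < Real.exp a := Real.exp_pos a
  set E := Real.exp a with hEdef
  have hhalfB := hhalf B ⟨hB.le, le_rfl⟩
  -- translate hAB: 4 * γ⁻¹ < E * |σ B - B|
  have hAB' : 4 * γ⁻¹ < E * |σ B - B| := by
    have : Real.exp (-a) = E⁻¹ := Real.exp_neg a
    rw [this] at hAB
    have := mul_lt_mul_of_pos_left hAB hE
    calc 4 * γ⁻¹ = E * (4 * γ⁻¹ * E⁻¹) := by field_simp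
    _ < E * |σ B - B| := this
  have hkey : 4 < γ * (E * |σ B - B|) := by
    have h1 : γ * (4 * γ⁻¹) < γ * (E * |σ B - B|) :=
      mul_lt_mul_of_pos_left hAB' hγ0
    have h2 : γ * (4 * γ⁻¹) = 4 := by field_simp
    linarith
  -- triangle inequality 1: E|σB - B| ≤ r B + |(E-1)B|
  have ht1 : E * |σ B - B| ≤ r B + |(E - 1) * B| := by
    rw [hr]
    have h : E * (σ B - B) = (E * σ B - B) - (E - 1) * B := by ring
    calc E * |σ B - B| = |E * (σ B - B)| := by
          rw [abs_mul, abs_of_pos hE]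
    _ = |(E * σ B - B) - (E - 1) * B| := by rw [h]
    _ ≤ |E * σ B - B| + |(E - 1) * B| := abs_sub _ _
    _ = _ := by ring
  -- triangle inequality 2: r (B/2) ≥ |(E-1)B|/2 - E|σ(B/2) - B/2|
  have ht2 : |(E - 1) * B| / 2 - E * |σ (B / 2) - B / 2| ≤ r (B / 2) := by
    rw [hr]
    have h : (E - 1) * B / 2 = (E * σ (B / 2) - B / 2) - E * (σ (B / 2) - B / 2) := by
      ring
    have : |(E - 1) * B| / 2 = |(E - 1) * B / 2| := by
      rw [abs_div]; simp
    rw [this, h]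
    have := abs_sub (E * σ (B / 2) - B / 2) (E * (σ (B / 2) - B / 2))
    have habs : |E * (σ (B / 2) - B / 2)| = E * |σ (B / 2) - B / 2| := by
      rw [abs_mul, abs_of_pos hE]
    linarith
  have hmain : 1 < r (B / 2) := by
    have h3 : E * |σ (B / 2) - B / 2| ≤ (1 / 2 - γ) * (E * |σ B - B|) := by
      have := mul_le_mul_of_nonneg_left hhalfB hE.le
      linarith [this]
    nlinarith [abs_nonneg (σ B - B), abs_nonneg ((E - 1) * B)]
  refine ⟨hmain, ?_⟩
  -- IVT on [0, B/2]
  have hrcont : ContinuousOn r (Set.Icc 0 (B / 2)) := by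
    have : r = fun t => |E * σ t - t| := funext hr
    rw [this]
    exact ((continuous_const.mul hσcont).sub continuous_id).abs.continuousOn
  have hr0 : r 0 = 0 := by rw [hr, hσ0]; simp
  have h01 : (1:ℝ) ∈ Set.Icc (r 0) (r (B / 2)) := by
    rw [hr0]; exact ⟨zero_le_one, hmain.le⟩
  obtain ⟨N, hN, hNval⟩ := intermediate_value_Icc (by linarith : (0:ℝ) ≤ B / 2)
    hrcont h01
  exact ⟨N, ⟨hN.1, le_trans hN.2 (by linarith)⟩, hNval⟩
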